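/- Let E be a finite-dimensional real inner product space and A₁, A₂ two p-dimensional subspaces with principal angles θ₁ ≥ … ≥ θ_p. Then cos α₂ = ∏_{i=1}^p cos θᵢ, where α₂ is the projective angle between the lines Λ^p A₁ and Λ^p A₂; in particular (cos θ₁)^p ≤ cos α₂ ≤ cos θ₁. -/

import Mathlib

/-- Let `A₁, A₂` be `p`-dimensional subspaces of a finite-dimensional real inner product
space, with orthonormal bases `u`, `v` realizing the principal angles
`θ₁ ≥ … ≥ θ_p` (i.e. `⟪u i, v j⟫ = δᵢⱼ cos θⱼ`).  The cosine of the projective angle `α₂`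
between the lines `Λ^p A₁` and `Λ^p A₂` — computed through the Gram determinant formula for
the induced inner product on `Λ^p E` — equals `∏ᵢ cos θᵢ`; in particular
`(cos θ₁)^p ≤ cos α₂ ≤ cos θ₁`. -/
theorem cos_angle_exteriorPower {E : Type*} [NormedAddCommGroup E] [InnerProductSpace ℝ E]
    [FiniteDimensional ℝ E] (p : ℕ) (hp : 0 < p) (A₁ A₂ : Submodule ℝ E)
    (θ : Fin p → ℝ) (hθ0 : ∀ i, 0 ≤ θ i) (hθπ : ∀ i, θ i ≤ Real.pi / 2)
    (hanti : Antitone θ)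
    (u v : Fin p → E) (hu : Orthonormal ℝ u) (hv : Orthonormal ℝ v)
    (hA₁ : A₁ = Submodule.span ℝ (Set.range u))
    (hA₂ : A₂ = Submodule.span ℝ (Set.range v))
    (huv : ∀ i j, (inner ℝ (u i) (v j) : ℝ) = if i = j then Real.cos (θ j) else 0) :
    Real.cos (Real.arccos |(Matrix.of fun i j => (inner ℝ (u i) (v j) : ℝ)).det|)
        = ∏ i, Real.cos (θ i) ∧
    (Real.cos (θ ⟨0, hp⟩)) ^ p ≤ ∏ i, Real.cos (θ i) ∧
    ∏ i, Real.cos (θ i) ≤ Real.cos (θ ⟨0, hp⟩) := by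
  haveI : NeZero p := ⟨hp.ne'⟩
  have hcos0 : ∀ i, 0 ≤ Real.cos (θ i) := fun i =>
    Real.cos_nonneg_of_mem_Icc ⟨by linarith [Real.pi_pos, hθ0 i], hθπ i⟩
  have hcos1 : ∀ i, Real.cos (θ i) ≤ 1 := fun i => Real.cos_le_one _
  have hdet : (Matrix.of fun i j => (inner ℝ (u i) (v j) : ℝ)).det = ∏ i, Real.cos (θ i) := by
    have : (Matrix.of fun i j => (inner ℝ (u i) (v j) : ℝ))
        = Matrix.diagonal fun i => Real.cos (θ i) := by
      ext i j
      simp only [Matrix.of_apply, Matrix.diagonal_apply, huv]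
      by_cases h : i = j <;> simp [h]
    rw [this, Matrix.det_diagonal]
  have hprod0 : 0 ≤ ∏ i, Real.cos (θ i) := Finset.prod_nonneg fun i _ => hcos0 i
  have hprod1 : ∏ i, Real.cos (θ i) ≤ 1 :=
    Finset.prod_le_one (fun i _ => hcos0 i) (fun i _ => hcos1 i)
  refine ⟨?_, ?_, ?_⟩
  · rw [hdet, abs_of_nonneg hprod0, Real.cos_arccos (by linarith) hprod1]
  · calc (Real.cos (θ ⟨0, hp⟩)) ^ p = ∏ _i : Fin p, Real.cos (θ ⟨0, hp⟩) := by
          simp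
      _ ≤ ∏ i, Real.cos (θ i) := by
          refine Finset.prod_le_prod (fun i _ => hcos0 _) (fun i _ => ?_)
          exact Real.cos_le_cos_of_nonneg_of_le_pi (hθ0 i)
            (by linarith [hθπ ⟨0, hp⟩, Real.pi_pos]) (hanti (Fin.zero_le i))
  · calc ∏ i, Real.cos (θ i) ≤ Real.cos (θ ⟨0, hp⟩) * ∏ i ∈ Finset.univ.erase ⟨0, hp⟩,
          Real.cos (θ i) := by
          rw [← Finset.prod_erase_mul _ _ (Finset.mem_univ (⟨0, hp⟩ : Fin p)), mul_comm]
      _ ≤ Real.cos (θ ⟨0, hp⟩) * 1 := by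
          exact mul_le_mul_of_nonneg_left
            (Finset.prod_le_one (fun i _ => hcos0 i) (fun i _ => hcos1 i)) (hcos0 _)
      _ = Real.cos (θ ⟨0, hp⟩) := mul_one _
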